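/- Assuming that every $m$-point planar set determines $O(m^{2+\delta})$ unit-area triangles for some fixed $0 < \delta \le 1/3$: if $S$ is a set of $n$ points in the plane and some line contains exactly $\ell$ points of $S$, then $S$ determines at most $O((n-\ell)\ell + (n-\ell)^{2+\delta})$ unit-area triangles. -/

import Mathlib

/-- Twice the signed area: the determinant of two planar vectors. -/
def det2 (u v : Fin 2 → ℝ) : ℝ := u 0 * v 1 - u 1 * v 0

/-- `T` is a unit-area triangle with vertices in the plane. -/
def IsUnitTriangle (T : Set (Fin 2 → ℝ)) : Prop :=
  ∃ a b c : Fin 2 → ℝ, a ≠ b ∧ a ≠ c ∧ b ≠ c ∧ T = {a, b, c} ∧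
    |det2 (b - a) (c - a)| / 2 = 1

/-- The set of unit-area triangles with vertices in `P`. -/
def unitTriangles (P : Set (Fin 2 → ℝ)) : Set (Set (Fin 2 → ℝ)) :=
  {T | T ⊆ P ∧ IsUnitTriangle T}

lemma det2_eq_zero_iff {u : Fin 2 → ℝ} (hu : u ≠ 0) (v : Fin 2 → ℝ) :
    det2 u v = 0 ↔ ∃ t : ℝ, v = t • u := by
  constructor
  · intro h
    by_cases h0 : u 0 = 0
    · have h1 : u 1 ≠ 0 := by
        intro h1; apply hu; funext i; fin_cases i <;> simp [h0, h1]
      have hv0 : v 0 = 0 := by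
        simp [det2, h0] at h
        rcases h with h | h
        · exact absurd h h1
        · exact h
      refine ⟨v 1 / u 1, ?_⟩
      funext i; fin_cases i <;> simp [h0, hv0] <;> field_simp
    · refine ⟨v 0 / u 0, ?_⟩
      funext i
      have h' : u 0 * v 1 = u 1 * v 0 := by simp [det2] at h; linarith
      fin_cases i <;> simp <;> field_simp <;> linarith
  · rintro ⟨t, rfl⟩; simp [det2]; ring

lemma det2_smul_left (s : ℝ) (u v : Fin 2 → ℝ) : det2 (s • u) v = s * det2 u v := by
  simp [det2]; ring

lemma ncard_prod' {α β : Type*} {s : Set α} {t : Set β} (hs : s.Finite) (ht : t.Finite) :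
    (s ×ˢ t).ncard = s.ncard * t.ncard := by
  rw [Set.ncard_eq_toFinset_card _ (hs.prod ht), Set.ncard_eq_toFinset_card _ hs,
    Set.ncard_eq_toFinset_card _ ht, ← Finset.card_product]
  congr 1; ext x; simp

lemma mem_line_iff {p q : Fin 2 → ℝ} (hpq : p ≠ q) (x : Fin 2 → ℝ) :
    Collinear ℝ {p, q, x} ↔ ∃ t : ℝ, x = p + t • (q - p) := by
  rw [collinear_iff_of_mem (show p ∈ ({p, q, x} : Set (Fin 2 → ℝ)) by simp)]
  constructor
  · rintro ⟨v, hv⟩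
    obtain ⟨cq, hq⟩ := hv q (by simp)
    obtain ⟨cx, hx⟩ := hv x (by simp)
    have hcq : cq ≠ 0 := by
      rintro rfl; simp at hq; exact hpq hq.symm
    refine ⟨cx / cq, ?_⟩
    have hqp : q - p = cq • v := by rw [hq]; simp [vadd_eq_add]
    rw [hx, hqp, smul_smul, div_mul_cancel₀ _ hcq, vadd_eq_add, add_comm]
  · rintro ⟨t, rfl⟩
    refine ⟨q - p, ?_⟩
    intro r hr
    simp only [Set.mem_insert_iff, Set.mem_singleton_iff] at hr
    rcases hr with rfl | rfl | rfl
    · exact ⟨0, by simp⟩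
    · exact ⟨1, by simp [vadd_eq_add]⟩
    · exact ⟨t, by simp [vadd_eq_add]; abel⟩

def Ok (T : Set (Fin 2 → ℝ)) (a b c : Fin 2 → ℝ) : Prop :=
  a ≠ b ∧ a ≠ c ∧ b ≠ c ∧ T = {a, b, c} ∧
    (det2 (b - a) (c - a) = 2 ∨ det2 (b - a) (c - a) = -2)

lemma Ok.swap23 {T a b c} (h : Ok T a b c) : Ok T a c b := by
  obtain ⟨h1, h2, h3, h4, h5⟩ := h
  refine ⟨h2, h1, Ne.symm h3, by rw [h4]; ext x; simp; tauto, ?_⟩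
  have : det2 (c - a) (b - a) = -det2 (b - a) (c - a) := by simp [det2]; ring
  rw [this]
  rcases h5 with h | h <;> [right; left] <;> rw [h] <;> ring

lemma Ok.rot {T a b c} (h : Ok T a b c) : Ok T c a b := by
  obtain ⟨h1, h2, h3, h4, h5⟩ := h
  refine ⟨Ne.symm h2, Ne.symm h3, h1, by rw [h4]; ext x; simp; tauto, ?_⟩
  have : det2 (a - c) (b - c) = det2 (b - a) (c - a) := by simp [det2]; ring
  rw [this]; exact h5

lemma exists_ok {T : Set (Fin 2 → ℝ)} (h : IsUnitTriangle T) :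
    ∃ a b c, Ok T a b c := by
  obtain ⟨a, b, c, h1, h2, h3, h4, h5⟩ := h
  refine ⟨a, b, c, h1, h2, h3, h4, ?_⟩
  have habs : |det2 (b - a) (c - a)| = 2 := by
    field_simp at h5; linarith
  rcases abs_eq (by norm_num : (0:ℝ) ≤ 2) |>.mp habs with h | h
  · exact Or.inl h
  · exact Or.inr h

lemma exists_ok_sorted (L : Set (Fin 2 → ℝ)) {T : Set (Fin 2 → ℝ)} (h : IsUnitTriangle T) :
    ∃ a b c, Ok T a b c ∧ (a ∈ L → b ∈ L) ∧ (b ∈ L → c ∈ L) := by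
  obtain ⟨a, b, c, hok⟩ := exists_ok h
  by_cases ha : a ∈ L <;> by_cases hb : b ∈ L <;> by_cases hc : c ∈ L
  · exact ⟨a, b, c, hok, fun _ => hb, fun _ => hc⟩
  · exact ⟨c, a, b, hok.rot, fun h => absurd h hc, fun _ => hb⟩
  · exact ⟨b, c, a, hok.rot.rot, fun h => absurd h hb, fun _ => ha⟩
  · exact ⟨b, c, a, hok.rot.rot, fun h => absurd h hb, fun h => absurd h hc⟩
  · exact ⟨a, b, c, hok, fun h => absurd h ha, fun _ => hc⟩
  · exact ⟨a, c, b, hok.swap23, fun h => absurd h ha, fun _ => hb⟩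
  · exact ⟨a, b, c, hok, fun h => absurd h ha, fun h => absurd h hb⟩
  · exact ⟨a, b, c, hok, fun h => absurd h ha, fun h => absurd h hb⟩

lemma area_two_on (p e a : Fin 2 → ℝ) (t t' : ℝ) :
    det2 ((p + t • e) - a) ((p + t' • e) - a) = (t' - t) * det2 e (a - p) := by
  simp [det2]; ring

lemma area_one_on (a b p e : Fin 2 → ℝ) (t : ℝ) :
    det2 (b - a) ((p + t • e) - a) = det2 (b - a) (p - a) - t * det2 e (b - a) := by
  simp [det2]; ring

lemma det2_sub_split (e a c p : Fin 2 → ℝ) :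
    det2 e (c - a) = det2 e (c - p) - det2 e (a - p) := by
  simp [det2]; ring

lemma param_shift (p e : Fin 2 → ℝ) (t t' : ℝ) :
    p + t' • e = (p + t • e) + (t' - t) • e := by
  funext i; simp; ring

/-- assuming every `m`-point planar set determines at most
`C · m^(2+δ)` unit-area triangles (`0 < δ ≤ 1/3`), any `n`-point set `S` with a
line containing exactly `ℓ` of its points determines at most
`O((n-ℓ)·ℓ + (n-ℓ)^(2+δ))` unit-area triangles. -/
theorem stmt7 (δ C : ℝ) (hδ0 : 0 < δ) (hδ1 : δ ≤ 1 / 3) (hC : 0 < C)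
    (hyp : ∀ P : Set (Fin 2 → ℝ), P.Finite →
      ((unitTriangles P).ncard : ℝ) ≤ C * (P.ncard : ℝ) ^ ((2 : ℝ) + δ)) :
    ∃ C' : ℝ, 0 < C' ∧
      ∀ (S : Set (Fin 2 → ℝ)), S.Finite →
        ∀ (n ℓ : ℕ), S.ncard = n →
        ∀ (p q : Fin 2 → ℝ), p ≠ q →
          (S ∩ {x | Collinear ℝ {p, q, x}}).ncard = ℓ →
          ((unitTriangles S).ncard : ℝ) ≤
            C' * (((n - ℓ : ℕ) : ℝ) * ℓ + ((n - ℓ : ℕ) : ℝ) ^ ((2 : ℝ) + δ)) := by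
  refine ⟨C + 6, by linarith, ?_⟩
  intro S hS n ℓ hn p q hpq hℓ
  set Lset : Set (Fin 2 → ℝ) := {x | Collinear ℝ {p, q, x}} with hLset
  set e : Fin 2 → ℝ := q - p with he
  have he0 : e ≠ 0 := sub_ne_zero.mpr (Ne.symm hpq)
  set A : Set (Fin 2 → ℝ) := S ∩ Lset with hAdef
  set B : Set (Fin 2 → ℝ) := S \ Lset with hBdef
  have hA : A.Finite := hS.inter_of_left _
  have hB : B.Finite := hS.diff
  set m : ℕ := B.ncard with hmdef
  have hcards : A.ncard + B.ncard = S.ncard :=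
    Set.ncard_inter_add_ncard_diff_eq_ncard S Lset hS
  have hm : m = n - ℓ := by omega
  -- line membership facts
  have hmemL : ∀ x : Fin 2 → ℝ, x ∈ Lset ↔ ∃ t : ℝ, x = p + t • e :=
    fun x => mem_line_iff hpq x
  have hnotL : ∀ x : Fin 2 → ℝ, x ∉ Lset → det2 e (x - p) ≠ 0 := by
    intro x hx hdx
    obtain ⟨t, ht⟩ := (det2_eq_zero_iff he0 (x - p)).mp hdx
    exact hx ((hmemL x).mpr ⟨t, by rw [← ht]; abel⟩)
  have hfline : ∀ t : ℝ, det2 e ((p + t • e) - p) = 0 := by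
    intro t; simp [det2]; ring
  -- the covering maps
  set F2 : ℝ → (Fin 2 → ℝ) × (Fin 2 → ℝ) → Set (Fin 2 → ℝ) :=
    fun ε z => {z.1, z.2, z.2 + (ε / det2 e (z.1 - p)) • e} with hF2
  set F1p : ℝ → (Fin 2 → ℝ) × (Fin 2 → ℝ) → Set (Fin 2 → ℝ) :=
    fun ε z => {z.1, z.1 + (ε / det2 e (z.1 - p)) • e, z.2} with hF1p
  set F1n : ℝ → (Fin 2 → ℝ) × (Fin 2 → ℝ) → Set (Fin 2 → ℝ) :=
    fun ε z => {z.1, z.2,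
      p + ((det2 (z.2 - z.1) (p - z.1) - ε) / det2 e (z.2 - z.1)) • e} with hF1n
  have hcover : unitTriangles S ⊆ unitTriangles B ∪ (F2 2 '' (B ×ˢ A) ∪
      (F2 (-2) '' (B ×ˢ A) ∪ (F1p 2 '' (B ×ˢ A) ∪ (F1p (-2) '' (B ×ˢ A) ∪
      (F1n 2 '' (B ×ˢ B) ∪ F1n (-2) '' (B ×ˢ B)))))) := by
    rintro T ⟨hTS, hUT⟩
    obtain ⟨a, b, c, ⟨hab, hac, hbc, hTeq, hD⟩, hs1, hs2⟩ := exists_ok_sorted Lset hUT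
    have haS : a ∈ S := hTS (by rw [hTeq]; simp)
    have hbS : b ∈ S := hTS (by rw [hTeq]; simp)
    have hcS : c ∈ S := hTS (by rw [hTeq]; simp)
    by_cases ha : a ∈ Lset
    · -- all three on the line: impossible
      exfalso
      have hb := hs1 ha
      have hc := hs2 hb
      obtain ⟨ta, haeq⟩ := (hmemL a).1 ha
      obtain ⟨tb, hbeq⟩ := (hmemL b).1 hb
      obtain ⟨tc, hceq⟩ := (hmemL c).1 hc
      have hfa : det2 e (a - p) = 0 := by rw [haeq]; exact hfline ta
      rw [hbeq, hceq, area_two_on, hfa, mul_zero] at hD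
      rcases hD with h | h <;> norm_num at h
    · have hfa : det2 e (a - p) ≠ 0 := hnotL a ha
      have haB : a ∈ B := ⟨haS, ha⟩
      by_cases hb : b ∈ Lset
      · -- two on the line
        have hc := hs2 hb
        obtain ⟨tb, hbeq⟩ := (hmemL b).1 hb
        obtain ⟨tc, hceq⟩ := (hmemL c).1 hc
        have harea : (tc - tb) * det2 e (a - p) = det2 (b - a) (c - a) := by
          rw [hbeq, hceq, area_two_on]
        have hmemBA : (a, b) ∈ B ×ˢ A := ⟨haB, hbS, hb⟩
        rcases hD with hD | hD
        · refine Or.inr (Or.inl ⟨(a, b), hmemBA, ?_⟩)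
          have htc : tc - tb = 2 / det2 e (a - p) := by
            rw [eq_div_iff hfa]; rw [harea]; exact hD
          have hc' : c = b + (2 / det2 e (a - p)) • e := by
            rw [hceq, hbeq, ← htc, param_shift p e tb tc]
          rw [hTeq, hc']
        · refine Or.inr (Or.inr (Or.inl ⟨(a, b), hmemBA, ?_⟩))
          have htc : tc - tb = -2 / det2 e (a - p) := by
            rw [eq_div_iff hfa]; rw [harea]; exact hD
          have hc' : c = b + (-2 / det2 e (a - p)) • e := by
            rw [hceq, hbeq, ← htc, param_shift p e tb tc]
          rw [hTeq, hc']
      · have hfb : det2 e (b - p) ≠ 0 := hnotL b hb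
        have hbB : b ∈ B := ⟨hbS, hb⟩
        by_cases hc : c ∈ Lset
        · -- one on the line
          obtain ⟨tc, hceq⟩ := (hmemL c).1 hc
          by_cases hβ : det2 e (b - a) = 0
          · -- b - a parallel to e
            obtain ⟨s, hs⟩ := (det2_eq_zero_iff he0 (b - a)).mp hβ
            have hb' : b = a + s • e := by rw [← hs]; abel
            have harea : det2 (b - a) (c - a) = -(s * det2 e (a - p)) := by
              rw [hs, det2_smul_left, det2_sub_split e a c p, hceq, hfline]
              ring
            have hmemBA : (a, c) ∈ B ×ˢ A := ⟨haB, hcS, hc⟩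
            rcases hD with hD | hD
            · refine Or.inr (Or.inr (Or.inr (Or.inr (Or.inl ⟨(a, c), hmemBA, ?_⟩))))
              have hseq : s = -2 / det2 e (a - p) := by
                rw [eq_div_iff hfa]; rw [harea] at hD; linarith
              rw [hTeq, hb', hseq]
            · refine Or.inr (Or.inr (Or.inr (Or.inl ⟨(a, c), hmemBA, ?_⟩)))
              have hseq : s = 2 / det2 e (a - p) := by
                rw [eq_div_iff hfa]; rw [harea] at hD; linarith
              rw [hTeq, hb', hseq]
          · -- b - a not parallel to e
            have hmemBB : (a, b) ∈ B ×ˢ B := ⟨haB, hbB⟩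
            have harea : det2 (b - a) (c - a)
                = det2 (b - a) (p - a) - tc * det2 e (b - a) := by
              rw [hceq, area_one_on]
            rcases hD with hD | hD
            · refine Or.inr (Or.inr (Or.inr (Or.inr (Or.inr (Or.inl
                ⟨(a, b), hmemBB, ?_⟩)))))
              have htc : tc = (det2 (b - a) (p - a) - 2) / det2 e (b - a) := by
                rw [eq_div_iff hβ]; rw [harea] at hD; linarith
              rw [hTeq, hceq, htc]
            · refine Or.inr (Or.inr (Or.inr (Or.inr (Or.inr (Or.inr
                ⟨(a, b), hmemBB, ?_⟩)))))
              have htc : tc = (det2 (b - a) (p - a) - (-2)) / det2 e (b - a) := by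
                rw [eq_div_iff hβ]; rw [harea] at hD; linarith
              rw [hTeq, hceq, htc]
        · -- none on the line
          left
          refine ⟨?_, hUT⟩
          rw [hTeq]
          intro x hx
          simp only [Set.mem_insert_iff, Set.mem_singleton_iff] at hx
          rcases hx with rfl | rfl | rfl
          · exact haB
          · exact hbB
          · exact ⟨hcS, hc⟩
  -- finiteness and counting
  have hfinUB : (unitTriangles B).Finite :=
    hB.finite_subsets.subset (fun T hT => hT.1)
  have hBA : (B ×ˢ A).Finite := hB.prod hA
  have hBB : (B ×ˢ B).Finite := hB.prod hB
  have hBAc : (B ×ˢ A).ncard = m * ℓ := by rw [ncard_prod' hB hA, hℓ]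
  have hBBc : (B ×ˢ B).ncard = m * m := by rw [ncard_prod' hB hB]
  have i1 : ∀ ε : ℝ, (F2 ε '' (B ×ˢ A)).ncard ≤ m * ℓ := fun ε => by
    rw [← hBAc]; exact Set.ncard_image_le hBA
  have i2 : ∀ ε : ℝ, (F1p ε '' (B ×ˢ A)).ncard ≤ m * ℓ := fun ε => by
    rw [← hBAc]; exact Set.ncard_image_le hBA
  have i3 : ∀ ε : ℝ, (F1n ε '' (B ×ˢ B)).ncard ≤ m * m := fun ε => by
    rw [← hBBc]; exact Set.ncard_image_le hBB
  have hcount : (unitTriangles S).ncard ≤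
      (unitTriangles B).ncard + (m * ℓ + (m * ℓ + (m * ℓ + (m * ℓ + (m * m + m * m))))) := by
    refine le_trans (Set.ncard_le_ncard hcover ?_) ?_
    · exact hfinUB.union ((hBA.image _).union ((hBA.image _).union ((hBA.image _).union
        ((hBA.image _).union ((hBB.image _).union (hBB.image _))))))
    · refine le_trans (Set.ncard_union_le _ _) (Nat.add_le_add le_rfl ?_)
      refine le_trans (Set.ncard_union_le _ _) (Nat.add_le_add (i1 2) ?_)
      refine le_trans (Set.ncard_union_le _ _) (Nat.add_le_add (i1 (-2)) ?_)
      refine le_trans (Set.ncard_union_le _ _) (Nat.add_le_add (i2 2) ?_)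
      refine le_trans (Set.ncard_union_le _ _) (Nat.add_le_add (i2 (-2)) ?_)
      exact le_trans (Set.ncard_union_le _ _) (Nat.add_le_add (i3 2) (i3 (-2)))
  -- arithmetic
  have hUB : ((unitTriangles B).ncard : ℝ) ≤ C * (m : ℝ) ^ ((2:ℝ) + δ) := by
    rw [hmdef]; exact hyp B hB
  have hsq : ((m : ℝ)) * m ≤ (m : ℝ) ^ ((2:ℝ) + δ) := by
    rcases Nat.eq_zero_or_pos m with h0 | h1
    · rw [h0]; simp
      rw [Real.zero_rpow (by positivity)]
    · have h1 : (1:ℝ) ≤ (m:ℝ) := by exact_mod_cast h1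
      calc ((m:ℝ)) * m = (m:ℝ) ^ ((2:ℕ):ℝ) := by
            rw [Real.rpow_natCast]; ring
        _ ≤ (m:ℝ) ^ ((2:ℝ) + δ) := by
            apply Real.rpow_le_rpow_of_exponent_le h1
            push_cast; linarith
  have hcast : ((unitTriangles S).ncard : ℝ) ≤
      ((unitTriangles B).ncard : ℝ) + (4 * ((m:ℝ) * ℓ) + 2 * ((m:ℝ) * m)) := by
    have := hcount
    have h' : ((unitTriangles S).ncard : ℝ) ≤
        (((unitTriangles B).ncard + (m * ℓ + (m * ℓ + (m * ℓ + (m * ℓ + (m * m + m * m)))))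
          : ℕ) : ℝ) := by exact_mod_cast this
    refine le_trans h' ?_
    push_cast
    ring_nf
    linarith
  rw [← hm]
  have hP : (0:ℝ) ≤ (m:ℝ) ^ ((2:ℝ) + δ) := Real.rpow_nonneg (by positivity) _
  have hX : (0:ℝ) ≤ (m:ℝ) * ℓ := by positivity
  nlinarith [hcast, hUB, hsq, hC.le, mul_nonneg hC.le hX, mul_nonneg hC.le hP]
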